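/- arXiv:1304.6934 — 2 statements merged into one kernel-verified Lean document; each statement's English description precedes it below -/
import Mathlib

section
/- Let D ≥ 3 be an integer, g_c := D^D/(D+1)^{D+1}, and define G_NLO(g) := (D(D+1)/2)·g²·G_LO(g)^{2D+2} / ((2 − G_LO(g))·(1 − g·D·G_LO(g)^{D+1})) for 0 ≤ g < g_c, where G_LO(g) is the unique solution G ∈ [1, (D+1)/D] of G = 1 + g·G^{D+1}. Define the next-to-leading-order free energy E_NLO(g) := ∫_0^g G_NLO(t)/t dt. Then E_NLO extends to a continuous function on [0, g_c], and lim_{g→g_c⁻} (E_NLO(g_c) − E_NLO(g)) / √(1 − g/g_c) = √(D(D+1)/2)/(D − 1); i.e., the next-to-leading-order free energy has critical behaviour (1 − g/g_c)^{2 − γ} with susceptibility exponent γ_NLO = 3/2. -/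
open Set Filter Real

namespace NLO15

noncomputable def psi (D : ℕ) : ℝ → ℝ := fun u => (u - 1) / u ^ (D + 1)
noncomputable def Gstar (D : ℕ) : ℝ := ((D : ℝ) + 1) / D
noncomputable def HH (D : ℕ) : ℝ → ℝ :=
  fun x => -((D : ℝ) * ((D : ℝ) + 1) / 4) * (Real.log x + Real.log (2 - x))

variable {D : ℕ}

lemma DR3 (hD : 3 ≤ D) : (3 : ℝ) ≤ (D : ℝ) := by exact_mod_cast hD

lemma one_lt_Gstar (hD : 3 ≤ D) : 1 < Gstar D := by
  have h := DR3 hD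
  rw [Gstar, lt_div_iff₀ (by linarith)]
  linarith

lemma Gstar_lt_two (hD : 3 ≤ D) : Gstar D < 2 := by
  have h := DR3 hD
  rw [Gstar, div_lt_iff₀ (by linarith)]
  linarith

lemma gcrit_pos (hD : 3 ≤ D) : 0 < (D : ℝ) ^ D / ((D : ℝ) + 1) ^ (D + 1) := by
  have h := DR3 hD
  exact div_pos (pow_pos (by linarith) _) (pow_pos (by linarith) _)

lemma psi_one : psi D 1 = 0 := by simp [psi]

lemma psi_Gstar (hD : 3 ≤ D) :
    psi D (Gstar D) = (D : ℝ) ^ D / ((D : ℝ) + 1) ^ (D + 1) := by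
  have h := DR3 hD
  have hD0 : (D : ℝ) ≠ 0 := by linarith
  have hD1 : (D : ℝ) + 1 ≠ 0 := by linarith
  rw [psi, Gstar, div_pow]
  rw [div_eq_div_iff]
  · field_simp
    ring
  · positivity
  · positivity

lemma hasDerivAt_psi {u : ℝ} (hu : u ≠ 0) :
    HasDerivAt (psi D) ((((D : ℝ) + 1) - D * u) / u ^ (D + 2)) u := by
  have h1 : HasDerivAt (fun u : ℝ => u - 1) 1 u := (hasDerivAt_id u).sub_const 1
  have h2 : HasDerivAt (fun u : ℝ => u ^ (D + 1)) ((D + 1 : ℕ) * u ^ D) u := by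
    simpa using hasDerivAt_pow (D + 1) u
  have h3 := h1.div h2 (pow_ne_zero _ hu)
  refine h3.congr_deriv ?_
  have hpow : u ^ D ≠ 0 := pow_ne_zero _ hu
  rw [eq_comm, div_eq_div_iff (pow_ne_zero _ hu) (pow_ne_zero _ (pow_ne_zero _ hu))]
  push_cast
  ring

lemma psi_deriv_pos (hD : 3 ≤ D) {u : ℝ} (h1 : 0 < u) (h2 : u < Gstar D) :
    0 < (((D : ℝ) + 1) - D * u) / u ^ (D + 2) := by
  have h := DR3 hD
  apply div_pos
  · have h3 : (D : ℝ) * u < (D : ℝ) * Gstar D :=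
      mul_lt_mul_of_pos_left h2 (by linarith)
    rw [Gstar, mul_div_cancel₀] at h3
    · linarith
    · linarith
  · positivity

lemma psi_strictMono (hD : 3 ≤ D) : StrictMonoOn (psi D) (Icc 1 (Gstar D)) := by
  have h := DR3 hD
  apply strictMonoOn_of_hasDerivWithinAt_pos (convex_Icc _ _)
    (f' := fun u => (((D : ℝ) + 1) - D * u) / u ^ (D + 2))
  · apply ContinuousOn.div (by fun_prop) (by fun_prop)
    intro x hx
    have h1 : (1:ℝ) ≤ x := hx.1
    positivity
  · intro x hx
    rw [interior_Icc] at hx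
    have hx0 : x ≠ 0 := by
      have := hx.1; intro h'; rw [h'] at this; linarith
    exact (hasDerivAt_psi hx0).hasDerivWithinAt
  · intro x hx
    rw [interior_Icc] at hx
    exact psi_deriv_pos hD (by linarith [hx.1]) hx.2

lemma psi_mapsTo (hD : 3 ≤ D) {u : ℝ} (hu : u ∈ Icc 1 (Gstar D)) :
    psi D u ∈ Icc 0 ((D : ℝ) ^ D / ((D : ℝ) + 1) ^ (D + 1)) := by
  have hmono := (psi_strictMono hD).monotoneOn
  constructor
  · have := hmono (left_mem_Icc.2 (one_lt_Gstar hD).le) hu hu.1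
    rwa [psi_one] at this
  · have := hmono hu (right_mem_Icc.2 (one_lt_Gstar hD).le) hu.2
    rwa [psi_Gstar hD] at this

lemma hasDerivAt_HH (hD : 3 ≤ D) {x : ℝ} (hx : 0 < x) (hx2 : x < 2) :
    HasDerivAt (HH D) (-((D : ℝ) * ((D : ℝ) + 1) / 4) * (x⁻¹ - (2 - x)⁻¹)) x := by
  have h1 : HasDerivAt (fun y : ℝ => Real.log y) x⁻¹ x := Real.hasDerivAt_log hx.ne'
  have h2 : HasDerivAt (fun y : ℝ => Real.log (2 - y)) (-1 / (2 - x)) x := by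
    have hin : HasDerivAt (fun y : ℝ => 2 - y) (-1) x := by
      simpa using (hasDerivAt_id x).const_sub 2
    simpa using hin.log (by linarith : (2:ℝ) - x ≠ 0)
  have h3 := (h1.add h2).const_mul (-((D : ℝ) * ((D : ℝ) + 1) / 4))
  refine h3.congr_deriv ?_
  have hne : (2:ℝ) - x ≠ 0 := by linarith
  ring

end NLO15

open intervalIntegral in
/-- Let `D ≥ 3`, `g_c := D^D/(D+1)^(D+1)`, `G_LO` the leading-order melonic
2-point function, `G_NLO` the next-to-leading-order 2-point function (closed form), and
`E_NLO(g) := ∫_0^g G_NLO(t)/t dt` the next-to-leading-order free energy. Then `E_NLO` extends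
to a continuous function on `[0, g_c]` and
`lim_{g→g_c⁻} (E_NLO(g_c) − E_NLO(g)) / √(1 − g/g_c) = √(D(D+1)/2)/(D − 1)`, i.e. the
susceptibility exponent is `γ_NLO = 3/2`. -/
theorem nlo_free_energy_critical_behaviour (D : ℕ) (hD : 3 ≤ D) (G_LO G_NLO E_NLO : ℝ → ℝ)
    (hG : ∀ g ∈ Set.Icc (0 : ℝ) ((D : ℝ) ^ D / ((D : ℝ) + 1) ^ (D + 1)),
      G_LO g ∈ Set.Icc (1 : ℝ) (((D : ℝ) + 1) / D) ∧ G_LO g = 1 + g * (G_LO g) ^ (D + 1))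
    (hN : ∀ g ∈ Set.Ico (0 : ℝ) ((D : ℝ) ^ D / ((D : ℝ) + 1) ^ (D + 1)),
      G_NLO g = ((D : ℝ) * ((D : ℝ) + 1) / 2) * g ^ 2 * (G_LO g) ^ (2 * D + 2) /
        ((2 - G_LO g) * (1 - g * D * (G_LO g) ^ (D + 1))))
    (hE : ∀ g ∈ Set.Ico (0 : ℝ) ((D : ℝ) ^ D / ((D : ℝ) + 1) ^ (D + 1)),
      E_NLO g = ∫ t in (0 : ℝ)..g, G_NLO t / t) :
    ∃ F : ℝ → ℝ,
      ContinuousOn F (Set.Icc (0 : ℝ) ((D : ℝ) ^ D / ((D : ℝ) + 1) ^ (D + 1))) ∧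
      (∀ g ∈ Set.Ico (0 : ℝ) ((D : ℝ) ^ D / ((D : ℝ) + 1) ^ (D + 1)), F g = E_NLO g) ∧
      Filter.Tendsto
        (fun g : ℝ => (F ((D : ℝ) ^ D / ((D : ℝ) + 1) ^ (D + 1)) - F g) /
          Real.sqrt (1 - g / ((D : ℝ) ^ D / ((D : ℝ) + 1) ^ (D + 1))))
        (nhdsWithin ((D : ℝ) ^ D / ((D : ℝ) + 1) ^ (D + 1))
          (Set.Iio ((D : ℝ) ^ D / ((D : ℝ) + 1) ^ (D + 1))))
        (nhds (Real.sqrt ((D : ℝ) * ((D : ℝ) + 1) / 2) / ((D : ℝ) - 1))) := by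
  have hR := NLO15.DR3 hD
  set c : ℝ := (D : ℝ) ^ D / ((D : ℝ) + 1) ^ (D + 1) with hcdef
  set Gs : ℝ := NLO15.Gstar D with hGsdef
  have h1G : 1 < Gs := NLO15.one_lt_Gstar hD
  have hG2 : Gs < 2 := NLO15.Gstar_lt_two hD
  have hc0 : 0 < c := NLO15.gcrit_pos hD
  have hGsD : ∀ g ∈ Set.Icc (0:ℝ) c, G_LO g ∈ Set.Icc (1:ℝ) Gs ∧
      G_LO g = 1 + g * (G_LO g) ^ (D + 1) := hG
  have hmem : ∀ g ∈ Set.Icc (0:ℝ) c, G_LO g ∈ Set.Icc (1:ℝ) Gs := fun g hg => (hGsD g hg).1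
  -- psi inverts G_LO
  have hpsiG : ∀ g ∈ Set.Icc (0:ℝ) c, NLO15.psi D (G_LO g) = g := by
    intro g hg
    have h1 : 1 ≤ G_LO g := (hmem g hg).1
    have heq := (hGsD g hg).2
    rw [NLO15.psi, div_eq_iff (by positivity)]
    linarith
  have hinj := (NLO15.psi_strictMono hD).injOn
  have hΦc : G_LO c = Gs := by
    apply hinj (hmem c ⟨hc0.le, le_rfl⟩) (right_mem_Icc.2 h1G.le)
    rw [hpsiG c ⟨hc0.le, le_rfl⟩, NLO15.psi_Gstar hD]
  have hΦ0 : G_LO 0 = 1 := by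
    apply hinj (hmem 0 ⟨le_rfl, hc0.le⟩) (left_mem_Icc.2 h1G.le)
    rw [hpsiG 0 ⟨le_rfl, hc0.le⟩, NLO15.psi_one]
  have hmonoΦ : StrictMonoOn G_LO (Set.Icc 0 c) := by
    intro x hx y hy hxy
    rcases lt_trichotomy (G_LO x) (G_LO y) with h|h|h
    · exact h
    · exfalso
      have hxx := hpsiG x hx
      have hyy := hpsiG y hy
      rw [h, hyy] at hxx
      linarith
    · exfalso
      have := NLO15.psi_strictMono hD (hmem y hy) (hmem x hx) h
      rw [hpsiG x hx, hpsiG y hy] at this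
      linarith
  have hΦlt : ∀ g ∈ Set.Ico (0:ℝ) c, G_LO g < Gs := by
    intro g hg
    have := hmonoΦ ⟨hg.1, hg.2.le⟩ ⟨hc0.le, le_rfl⟩ hg.2
    rwa [hΦc] at this
  have hSurj : ∀ u ∈ Set.Icc (1:ℝ) Gs, ∃ g ∈ Set.Icc (0:ℝ) c, G_LO g = u := by
    intro u hu
    have hmem' := NLO15.psi_mapsTo hD hu
    refine ⟨NLO15.psi D u, hmem', ?_⟩
    exact hinj (hmem _ hmem') hu (hpsiG _ hmem')
  -- continuity of G_LO on [0, c]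
  have hcontΦ : ContinuousOn G_LO (Set.Icc 0 c) := by
    intro a ha
    have hleft : 0 < a → ContinuousWithinAt G_LO (Set.Iic a) a := by
      intro h0a
      apply hmonoΦ.continuousWithinAt_left_of_exists_between
        (Icc_mem_nhdsLE_of_mem ⟨h0a, ha.2⟩)
      intro b hb
      have h1a : 1 < G_LO a := by
        have := hmonoΦ ⟨le_rfl, hc0.le⟩ ha h0a
        rwa [hΦ0] at this
      have hub : max b 1 < G_LO a := max_lt hb h1a
      have hGa : G_LO a ≤ Gs := (hmem a ha).2
      obtain ⟨x, hx, hxu⟩ := hSurj ((max b 1 + G_LO a)/2)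
        ⟨by have := le_max_right b 1; linarith, by linarith⟩
      refine ⟨x, hx, ?_, ?_⟩
      · rw [hxu]; have := le_max_left b 1; linarith
      · rw [hxu]; linarith
    have hright : a < c → ContinuousWithinAt G_LO (Set.Ici a) a := by
      intro hac
      apply hmonoΦ.continuousWithinAt_right_of_exists_between
        (Icc_mem_nhdsGE_of_mem ⟨ha.1, hac⟩)
      intro b hb
      have haG : G_LO a < Gs := hΦlt a ⟨ha.1, hac⟩
      have h1a : 1 ≤ G_LO a := (hmem a ha).1
      have hlb : G_LO a < min b Gs := lt_min hb haG
      obtain ⟨x, hx, hxu⟩ := hSurj ((G_LO a + min b Gs)/2)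
        ⟨by linarith, by have := min_le_right b Gs; linarith⟩
      refine ⟨x, hx, ?_, ?_⟩
      · rw [hxu]; linarith
      · rw [hxu]; have := min_le_left b Gs; linarith
    rcases eq_or_lt_of_le ha.1 with h0|h0
    · exact (hright (by rw [← h0]; exact hc0)).mono (by rw [← h0]; exact fun x hx => hx.1)
    rcases eq_or_lt_of_le ha.2 with hcc|hcc
    · exact (hleft h0).mono (by rw [hcc]; exact fun x hx => hx.2)
    · exact ((hleft h0).union (hright hcc)).mono (fun x _ => le_total x a)
  -- the denominator positivity
  have hden : ∀ t ∈ Set.Ico (0:ℝ) c,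
      0 < (2 - G_LO t) * (((D:ℝ)+1) - D * G_LO t) := by
    intro t ht
    have h1 : G_LO t < Gs := hΦlt t ht
    have h2 : 1 ≤ G_LO t := (hmem t ⟨ht.1, ht.2.le⟩).1
    have hDG : (D:ℝ) * Gs = (D:ℝ) + 1 := by
      rw [hGsdef, NLO15.Gstar, mul_div_cancel₀]
      linarith
    apply mul_pos
    · linarith
    · nlinarith
  set f : ℝ → ℝ := fun t => G_NLO t / t with hfdef
  set φ : ℝ → ℝ := fun t => ((D:ℝ)*((D:ℝ)+1)/2) * t * (G_LO t)^(2*D+2) /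
      ((2 - G_LO t) * (((D:ℝ)+1) - D * G_LO t)) with hφdef
  have hfφ : ∀ t ∈ Set.Ico (0:ℝ) c, f t = φ t := by
    intro t ht
    rcases eq_or_lt_of_le ht.1 with h0|h0
    · simp [hfdef, hφdef, ← h0]
    · have hbI : t ∈ Set.Icc (0:ℝ) c := ⟨ht.1, ht.2.le⟩
      have heq := (hGsD t hbI).2
      have hkey : 1 - t * (D:ℝ) * (G_LO t)^(D+1) = ((D:ℝ)+1) - D * G_LO t := by
        have h' : t * (G_LO t)^(D+1) = G_LO t - 1 := by linarith
        calc 1 - t * (D:ℝ) * (G_LO t)^(D+1)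
            = 1 - (D:ℝ) * (t * (G_LO t)^(D+1)) := by ring
          _ = 1 - (D:ℝ) * (G_LO t - 1) := by rw [h']
          _ = ((D:ℝ)+1) - D * G_LO t := by ring
      have hd := hden t ht
      simp only [hfdef, hφdef]
      rw [hN t ht, hkey, div_div, div_eq_div_iff (mul_pos hd h0).ne' hd.ne']
      ring
  have hφcont : ContinuousOn φ (Set.Ico 0 c) := by
    have hΦ' : ContinuousOn G_LO (Set.Ico 0 c) := hcontΦ.mono Set.Ico_subset_Icc_self
    apply ContinuousOn.div
    · exact (continuousOn_const.mul continuousOn_id).mul (hΦ'.pow _)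
    · exact (continuousOn_const.sub hΦ').mul
        (continuousOn_const.sub (continuousOn_const.mul hΦ'))
    · exact fun t ht => (hden t ht).ne'
  have hfcont : ContinuousOn f (Set.Ico 0 c) := hφcont.congr hfφ
  set I : ℝ → ℝ := fun g => ∫ t in (0:ℝ)..g, f t with hIdef
  have hInt : ∀ g ∈ Set.Ico (0:ℝ) c, IntervalIntegrable f MeasureTheory.volume 0 g := by
    intro g hg
    apply ContinuousOn.intervalIntegrable
    rw [Set.uIcc_of_le hg.1]
    exact hfcont.mono (fun x hx => ⟨hx.1, lt_of_le_of_lt hx.2 hg.2⟩)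
  have hIderiv : ∀ b ∈ Set.Ioo (0:ℝ) c, HasDerivAt I (f b) b := by
    intro b hb
    have hopen : IsOpen (Set.Ioo (0:ℝ) c) := isOpen_Ioo
    have hfc : ContinuousOn f (Set.Ioo 0 c) := hfcont.mono Set.Ioo_subset_Ico_self
    exact intervalIntegral.integral_hasDerivAt_right (hInt b ⟨hb.1.le, hb.2⟩)
      (hfc.stronglyMeasurableAtFilter hopen b hb)
      (hfc.continuousAt (hopen.mem_nhds hb))
  have hΦderiv : ∀ b ∈ Set.Ioo (0:ℝ) c, HasDerivAt G_LO
      (((((D:ℝ)+1) - D * G_LO b) / (G_LO b) ^ (D+2))⁻¹) b := by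
    intro b hb
    have hbI : b ∈ Set.Icc (0:ℝ) c := ⟨hb.1.le, hb.2.le⟩
    have h1 : 1 ≤ G_LO b := (hmem b hbI).1
    apply HasDerivAt.of_local_left_inverse
      (hcontΦ.continuousAt (Icc_mem_nhds hb.1 hb.2))
      (NLO15.hasDerivAt_psi (by linarith : G_LO b ≠ 0))
      (NLO15.psi_deriv_pos hD (by linarith) (hΦlt b ⟨hb.1.le, hb.2⟩)).ne'
    filter_upwards [Ioo_mem_nhds hb.1 hb.2] with x hx
    exact hpsiG x ⟨hx.1.le, hx.2.le⟩
  set F : ℝ → ℝ := fun g => NLO15.HH D (G_LO g) with hFdef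
  have hHHcont : ContinuousOn (NLO15.HH D) (Set.Icc 1 Gs) := by
    apply ContinuousOn.mul continuousOn_const
    apply ContinuousOn.add
    · apply ContinuousOn.log continuousOn_id
      intro x hx
      have h1 : (1:ℝ) ≤ x := hx.1
      simp only [id]
      intro h'
      rw [h'] at h1
      linarith
    · apply ContinuousOn.log (continuousOn_const.sub continuousOn_id)
      intro x hx
      have h2 : x ≤ Gs := hx.2
      intro h'
      simp only [Pi.sub_apply, id] at h'
      have : x = 2 := by linarith
      linarith
  have hFcont : ContinuousOn F (Set.Icc 0 c) :=
    hHHcont.comp hcontΦ (fun g hg => hmem g hg)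
  have hFderiv : ∀ b ∈ Set.Ioo (0:ℝ) c, HasDerivAt F (f b) b := by
    intro b hb
    have hbI : b ∈ Set.Icc (0:ℝ) c := ⟨hb.1.le, hb.2.le⟩
    have h1 : 1 ≤ G_LO b := (hmem b hbI).1
    have hlt : G_LO b < Gs := hΦlt b ⟨hb.1.le, hb.2⟩
    have hG0 : (0:ℝ) < G_LO b := by linarith
    have hG2' : G_LO b < 2 := by linarith
    have hHd := NLO15.hasDerivAt_HH hD hG0 hG2'
    have hcomp := HasDerivAt.comp b hHd (hΦderiv b hb)
    have hval : f b = (-((D : ℝ) * ((D : ℝ) + 1) / 4) * ((G_LO b)⁻¹ - (2 - G_LO b)⁻¹)) *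
        ((((D:ℝ)+1) - D * G_LO b) / (G_LO b) ^ (D+2))⁻¹ := by
      rw [hfφ b ⟨hb.1.le, hb.2⟩]
      simp only [hφdef]
      set Gb := G_LO b with hGbdef
      have hbG : b * Gb ^ (D+1) = Gb - 1 := by
        have := (hGsD b hbI).2; rw [← hGbdef] at this; linarith
      have hd := hden b ⟨hb.1.le, hb.2⟩
      rw [← hGbdef] at hd
      have h2G : (0:ℝ) < 2 - Gb := by linarith
      have hDG : (0:ℝ) < ((D:ℝ)+1) - (D:ℝ) * Gb := by
        by_contra hcon
        push_neg at hcon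
        nlinarith
      have hb' : b = (Gb - 1)/Gb^(D+1) := by
        rw [eq_div_iff (by positivity)]; exact hbG
      rw [hb', inv_div]
      field_simp
      ring
    rw [hval]
    exact hcomp
  have hFI : ∀ g ∈ Set.Ico (0:ℝ) c, F g = I g := by
    have hF0 : F 0 = 0 := by
      norm_num [hFdef, hΦ0, NLO15.HH]
    have hI0 : I 0 = 0 := by
      simp [hIdef]
    intro g hg
    rcases eq_or_lt_of_le hg.1 with h0|h0
    · rw [← h0, hF0, hI0]
    · have hconst : ∀ a ∈ Set.Ioc (0:ℝ) g, F g - I g = F a - I a := by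
        intro a ha
        have hsub : Set.Icc a g ⊆ Set.Ioo 0 c :=
          fun x hx => ⟨lt_of_lt_of_le ha.1 hx.1, lt_of_le_of_lt hx.2 hg.2⟩
        have hcont : ContinuousOn (fun x => F x - I x) (Set.Icc a g) := by
          intro x hx
          have hxo := hsub hx
          exact ((hFderiv x hxo).continuousAt.sub
            (hIderiv x hxo).continuousAt).continuousWithinAt
        have hderiv : ∀ x ∈ Set.Ico a g,
            HasDerivWithinAt (fun x => F x - I x) 0 (Set.Ici x) x := by
          intro x hx
          have hxo := hsub ⟨hx.1, hx.2.le⟩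
          have hder := (hFderiv x hxo).sub (hIderiv x hxo)
          have := hder.hasDerivWithinAt (s := Set.Ici x)
          rwa [sub_self] at this
        have hcc := constant_of_has_deriv_right_zero hcont hderiv g ⟨ha.2, le_rfl⟩
        simpa using hcc
      have htend1 : Filter.Tendsto (fun a => F a - I a)
          (nhdsWithin 0 (Set.Ioi (0:ℝ))) (nhds (F 0 - I 0)) := by
        apply Filter.Tendsto.sub
        · exact Filter.Tendsto.mono_left (hFcont 0 ⟨le_rfl, hc0.le⟩)
            (nhdsWithin_le_iff.mpr (Icc_mem_nhdsGT_of_mem ⟨le_rfl, hc0⟩))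
        · have hIcont : ContinuousOn I (Set.Icc 0 g) := by
            have hint : MeasureTheory.IntegrableOn f (Set.uIcc 0 g)
                MeasureTheory.volume := by
              rw [Set.uIcc_of_le hg.1]
              exact (hfcont.mono
                (fun x hx => ⟨hx.1, lt_of_le_of_lt hx.2 hg.2⟩)).integrableOn_Icc
            have hco := intervalIntegral.continuousOn_primitive_interval hint
            rwa [Set.uIcc_of_le hg.1] at hco
          exact Filter.Tendsto.mono_left (hIcont 0 ⟨le_rfl, hg.1⟩)
            (nhdsWithin_le_iff.mpr (Icc_mem_nhdsGT_of_mem ⟨le_rfl, h0⟩))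
      have htend2 : Filter.Tendsto (fun a => F a - I a)
          (nhdsWithin 0 (Set.Ioi (0:ℝ))) (nhds (F g - I g)) := by
        apply Filter.Tendsto.congr' _ tendsto_const_nhds
        filter_upwards [Ioc_mem_nhdsGT_of_mem ⟨le_rfl, h0⟩] with a ha
        exact hconst a ha
      have huniq := tendsto_nhds_unique htend2 htend1
      rw [hF0, hI0] at huniq
      linarith
  refine ⟨F, hFcont, ?_, ?_⟩
  · intro g hg
    rw [hFI g hg, hE g hg]
  · -- the critical limit
    have hGs0 : (0:ℝ) < Gs := by linarith
    have hGsne : Gs ≠ 0 := hGs0.ne'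
    set m : ℝ := (D:ℝ) / (2 * Gs ^ (D+2)) with hmdef
    have hm0 : 0 < m := div_pos (by linarith) (by positivity)
    have hev : Set.Ioo (1:ℝ) Gs ∈ nhdsWithin Gs (Set.Iio Gs) :=
      Ioo_mem_nhdsLT_of_mem ⟨h1G, le_rfl⟩
    have hψltc : ∀ x ∈ Set.Ioo (1:ℝ) Gs, NLO15.psi D x < c := by
      intro x hx
      have h' := NLO15.psi_strictMono hD ⟨hx.1.le, hx.2.le⟩
        (right_mem_Icc.2 h1G.le) hx.2
      rwa [NLO15.psi_Gstar hD, ← hcdef] at h'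
    have hT : Filter.Tendsto (fun x => (c - NLO15.psi D x) / (Gs - x)^2)
        (nhdsWithin Gs (Set.Iio Gs)) (nhds m) := by
      apply HasDerivAt.lhopital_zero_nhdsLT
        (f' := fun x => -((((D:ℝ)+1) - D*x)/x^(D+2))) (g' := fun x => -(2*(Gs - x)))
      · filter_upwards [hev] with x hx
        have hx0 : x ≠ 0 := by
          have := hx.1; intro h'; rw [h'] at this; linarith
        simpa using (NLO15.hasDerivAt_psi (D := D) hx0).const_sub c
      · filter_upwards with x
        have hid : HasDerivAt (fun y : ℝ => Gs - y) (-1) x := by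
          simpa using (hasDerivAt_id x).const_sub Gs
        refine (hid.pow 2).congr_deriv ?_
        push_cast
        ring
      · filter_upwards [self_mem_nhdsWithin] with x hx
        have hxlt : x < Gs := hx
        intro hcon
        rw [neg_eq_zero] at hcon
        linarith
      · have hψc : ContinuousAt (NLO15.psi D) Gs :=
          (NLO15.hasDerivAt_psi hGsne).continuousAt
        have h' : Filter.Tendsto (fun x => c - NLO15.psi D x) (nhds Gs)
            (nhds (c - NLO15.psi D Gs)) := tendsto_const_nhds.sub hψc
        rw [NLO15.psi_Gstar hD, ← hcdef, sub_self] at h'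
        exact h'.mono_left nhdsWithin_le_nhds
      · have h' : Filter.Tendsto (fun x : ℝ => (Gs - x)^2) (nhds Gs)
            (nhds ((Gs - Gs)^2)) :=
          (tendsto_const_nhds.sub tendsto_id).pow 2
        rw [sub_self] at h'
        norm_num at h'
        exact h'.mono_left nhdsWithin_le_nhds
      · have hmain : Filter.Tendsto (fun x => (D:ℝ)/(2*x^(D+2)))
            (nhdsWithin Gs (Set.Iio Gs)) (nhds m) := by
          rw [hmdef]
          apply Filter.Tendsto.mono_left ?_ nhdsWithin_le_nhds
          exact Filter.Tendsto.div tendsto_const_nhds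
            ((continuous_const.mul (continuous_pow _)).tendsto Gs) (by positivity)
        apply Filter.Tendsto.congr' ?_ hmain
        filter_upwards [hev] with x hx
        have hx0 : (0:ℝ) < x := by linarith [hx.1]
        have hgx : (0:ℝ) < Gs - x := by linarith [hx.2]
        have hD0 : (D:ℝ) ≠ 0 := by linarith
        have hnum : ((D:ℝ)+1) - (D:ℝ)*x = (D:ℝ)*(Gs - x) := by
          rw [hGsdef, NLO15.Gstar]
          field_simp
        rw [hnum, neg_div_neg_eq, div_div]
        rw [div_eq_div_iff (by positivity) (by positivity)]
        ring
    set dH : ℝ := -((D : ℝ) * ((D : ℝ) + 1) / 4) * (Gs⁻¹ - (2 - Gs)⁻¹) with hdHdef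
    have hdH : HasDerivAt (NLO15.HH D) dH Gs := NLO15.hasDerivAt_HH hD hGs0 hG2
    have hS : Filter.Tendsto (fun x => (NLO15.HH D Gs - NLO15.HH D x)/(Gs - x))
        (nhdsWithin Gs (Set.Iio Gs)) (nhds dH) := by
      have h1 := hasDerivAt_iff_tendsto_slope.mp hdH
      have h2 := h1.mono_left
        (nhdsWithin_mono Gs (fun x hx => (ne_of_lt hx : x ≠ Gs)))
      apply Filter.Tendsto.congr' ?_ h2
      filter_upwards [self_mem_nhdsWithin] with x hx
      have hne : x - Gs ≠ 0 := by
        have : x < Gs := hx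
        intro hcon; linarith [sub_eq_zero.mp hcon]
      have hne2 : Gs - x ≠ 0 := by
        have : x < Gs := hx
        intro hcon; linarith [sub_eq_zero.mp hcon]
      rw [slope_def_field]
      field_simp
      ring
    have hCT : Filter.Tendsto
        (fun x => Real.sqrt ((Gs - x)^2 / (1 - NLO15.psi D x / c)))
        (nhdsWithin Gs (Set.Iio Gs)) (nhds (Real.sqrt (c / m))) := by
      apply Filter.Tendsto.comp (Real.continuous_sqrt.tendsto (c/m))
      apply Filter.Tendsto.congr' ?_
        (Filter.Tendsto.div tendsto_const_nhds hT hm0.ne')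
      filter_upwards [hev] with x hx
      have hψlt := hψltc x hx
      have hgx : (0:ℝ) < Gs - x := by linarith [hx.2]
      have hcψ : (0:ℝ) < c - NLO15.psi D x := by linarith
      show c / ((c - NLO15.psi D x) / (Gs - x)^2) = (Gs - x)^2 / (1 - NLO15.psi D x / c)
      field_simp
    have hQ : Filter.Tendsto
        (fun x => (NLO15.HH D Gs - NLO15.HH D x) / Real.sqrt (1 - NLO15.psi D x / c))
        (nhdsWithin Gs (Set.Iio Gs)) (nhds (dH * Real.sqrt (c/m))) := by
      apply Filter.Tendsto.congr' ?_ (hS.mul hCT)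
      filter_upwards [hev] with x hx
      have hψlt := hψltc x hx
      have he : (0:ℝ) < 1 - NLO15.psi D x / c := by
        rw [sub_pos, div_lt_one hc0]; exact hψlt
      have hgx : (0:ℝ) < Gs - x := by linarith [hx.2]
      rw [Real.sqrt_div (sq_nonneg _), Real.sqrt_sq hgx.le]
      rw [div_mul_div_comm, mul_comm (NLO15.HH D Gs - NLO15.HH D x) (Gs - x),
        mul_div_mul_left _ _ hgx.ne']
    have hΦtend : Filter.Tendsto G_LO (nhdsWithin c (Set.Iio c))
        (nhdsWithin Gs (Set.Iio Gs)) := by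
      rw [tendsto_nhdsWithin_iff]
      constructor
      · have hcw : ContinuousWithinAt G_LO (Set.Icc 0 c) c := hcontΦ c ⟨hc0.le, le_rfl⟩
        have h' := Filter.Tendsto.mono_left hcw
          (nhdsWithin_le_iff.mpr (Icc_mem_nhdsLT_of_mem ⟨hc0, le_rfl⟩))
        rwa [hΦc] at h'
      · filter_upwards [Ioo_mem_nhdsLT_of_mem (⟨hc0, le_rfl⟩ : c ∈ Set.Ioc 0 c)]
          with x hx
        exact hΦlt x ⟨hx.1.le, hx.2⟩
    have hcomp := hQ.comp hΦtend
    have hdHval : dH = (D:ℝ)^2/(2*((D:ℝ)-1)) := by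
      have hD0 : (D:ℝ) ≠ 0 := by linarith
      have hD1 : (D:ℝ) - 1 ≠ 0 := by intro h'; nlinarith
      have hDp1 : (D:ℝ) + 1 ≠ 0 := by linarith
      have h2G : (2:ℝ) - Gs = ((D:ℝ)-1)/D := by
        rw [hGsdef, NLO15.Gstar]
        field_simp
        ring
      rw [hdHdef, h2G, hGsdef, NLO15.Gstar, inv_div, inv_div]
      field_simp
      ring
    have hcm : c / m = 2*((D:ℝ)+1)/(D:ℝ)^3 := by
      have hD0 : (D:ℝ) ≠ 0 := by linarith
      have key : c * Gs^(D+2) = ((D:ℝ)+1)/(D:ℝ)^2 := by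
        rw [hcdef, hGsdef, NLO15.Gstar, div_pow, div_mul_div_comm,
          div_eq_div_iff (by positivity) (by positivity)]
        ring
      rw [hmdef, div_div_eq_mul_div]
      rw [show c*(2*Gs^(D+2)) = 2*(c*Gs^(D+2)) by ring, key]
      field_simp
    have hL : dH * Real.sqrt (c/m) = Real.sqrt ((D:ℝ)*((D:ℝ)+1)/2)/((D:ℝ)-1) := by
      rw [hdHval, hcm]
      have hD1 : (0:ℝ) < (D:ℝ) - 1 := by linarith
      have hD0 : (D:ℝ) ≠ 0 := by linarith
      rw [show (D:ℝ)^2/(2*((D:ℝ)-1)) = ((D:ℝ)^2/2)/((D:ℝ)-1) from by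
        rw [div_div]]
      rw [div_mul_eq_mul_div]
      congr 1
      rw [show (D:ℝ)^2/2 = Real.sqrt (((D:ℝ)^2/2)^2) from
        (Real.sqrt_sq (by positivity)).symm]
      rw [← Real.sqrt_mul (by positivity)]
      congr 1
      rw [div_pow, div_mul_div_comm, div_eq_div_iff (by positivity) (by norm_num)]
      ring
    rw [← hL]
    apply Filter.Tendsto.congr' ?_ hcomp
    filter_upwards [Ioo_mem_nhdsLT_of_mem (⟨hc0, le_rfl⟩ : c ∈ Set.Ioc 0 c)]
      with g hg
    have hgI : g ∈ Set.Icc 0 c := ⟨hg.1.le, hg.2.le⟩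
    simp only [Function.comp]
    rw [hpsiG g hgI]
    simp only [hFdef]
    rw [hΦc]
end

section
/- Let D ≥ 1 and p ≥ 1 be integers, and let a closed (D+1)-colored graph with 2p vertices be encoded by permutations π_0, …, π_D of {1, …, p}. If the graph is connected (i.e., the subgroup of the symmetric group generated by {π_0⁻¹∘π_c : 0 ≤ c ≤ D} acts transitively on {1, …, p}), then the total number of faces F := Σ_{0≤c<c'≤D} (number of cycles of π_{c'}∘π_c⁻¹) satisfies F ≤ D + D(D−1)p/2; equivalently, the degree ω := ((D−1)!/2)·(D + D(D−1)p/2 − F) is nonnegative. -/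
/-- The number of cycles (orbits, including fixed points) of a permutation of `Fin n`. -/
def cycleCount {n : ℕ} (σ : Equiv.Perm (Fin n)) : ℕ :=
  σ.cycleType.card + (Finset.univ.filter fun i => σ i = i).card


open Equiv Equiv.Perm LinearMap Module
attribute [local instance] Classical.propDecidable
variable {p : ℕ}


def scSetoid (σ : Perm (Fin p)) : Setoid (Fin p) :=
  ⟨σ.SameCycle, ⟨SameCycle.refl σ, SameCycle.symm, SameCycle.trans⟩⟩

lemma apply_zpow_fixedish {σ : Perm (Fin p)} {v : Fin p → ℚ}
    (hv : ∀ t, v (σ t) = v t) : ∀ (i : ℤ) (x : Fin p), v ((σ ^ i) x) = v x := by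
  have hinv : ∀ t, v (σ⁻¹ t) = v t := by
    intro t
    have := hv (σ⁻¹ t)
    simpa using this.symm
  intro i
  induction i using Int.induction_on with
  | zero => simp
  | succ n ih =>
      intro x
      have : (σ ^ ((n : ℤ) + 1)) x = (σ ^ (n : ℤ)) (σ x) := by
        rw [zpow_add_one]
        simp [Equiv.Perm.mul_apply]
      rw [this, ih, hv]
  | pred n ih =>
      intro x
      have : (σ ^ ((-n : ℤ) - 1)) x = (σ ^ (-n : ℤ)) (σ⁻¹ x) := by
        rw [zpow_sub_one]
        simp [Equiv.Perm.mul_apply]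
      rw [this, ih, hinv]

lemma sameCycle_apply_eq {σ : Perm (Fin p)} {v : Fin p → ℚ}
    (hv : ∀ t, v (σ t) = v t) {x y : Fin p} (h : σ.SameCycle x y) : v x = v y := by
  obtain ⟨i, hi⟩ := h
  rw [← hi, apply_zpow_fixedish hv]

/-- linear equivalence between functions on the cycle-quotient and fixed vectors. -/
noncomputable def kerEquiv (σ : Perm (Fin p)) :
    (Quotient (scSetoid σ) → ℚ) ≃ₗ[ℚ]
      (ker (funLeft ℚ ℚ σ - LinearMap.id : (Fin p → ℚ) →ₗ[ℚ] (Fin p → ℚ))) where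
  toFun f := ⟨f ∘ (Quotient.mk (scSetoid σ)), by
    ext t
    simp only [LinearMap.sub_apply, funLeft_apply, LinearMap.id_apply, Pi.sub_apply,
      Function.comp_apply, Pi.zero_apply, sub_eq_zero]
    exact congrArg f (Quotient.sound ((scSetoid σ).symm ⟨1, by simp⟩))⟩
  map_add' f g := by ext t; simp
  map_smul' c f := by ext t; simp
  invFun v := Quotient.lift v.1 (by
    intro a b hab
    have hv : ∀ t, v.1 (σ t) = v.1 t := by
      intro t
      have hm := v.2
      simp only [mem_ker] at hm
      have h2 := congrFun hm t
      simp only [LinearMap.sub_apply, funLeft_apply, LinearMap.id_apply, Pi.sub_apply,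
        Pi.zero_apply, sub_eq_zero] at h2
      exact h2
    exact sameCycle_apply_eq hv hab)
  left_inv f := by
    funext q
    induction q using Quotient.ind
    rfl
  right_inv v := by
    apply Subtype.ext
    funext t
    rfl

lemma finrank_ker_eq_card_quot (σ : Perm (Fin p)) :
    finrank ℚ (ker (funLeft ℚ ℚ σ - LinearMap.id : (Fin p → ℚ) →ₗ[ℚ] (Fin p → ℚ)))
      = Fintype.card (Quotient (scSetoid σ)) := by
  rw [← (kerEquiv σ).finrank_eq, finrank_pi]

lemma fixed_of_sameCycle {σ : Perm (Fin p)} {x y : Fin p}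
    (h : σ.SameCycle x y) (hx : σ x = x) : x = y := by
  obtain ⟨i, hi⟩ := h
  rw [← hi, zpow_apply_eq_self_of_apply_eq_self hx]

def isFixedClass (σ : Perm (Fin p)) : Quotient (scSetoid σ) → Prop :=
  Quotient.lift (fun x => σ x = x) (by
    intro a b hab
    apply propext
    constructor
    · intro ha
      have := fixed_of_sameCycle hab ha
      rwa [← this]
    · intro hb
      have := fixed_of_sameCycle (SameCycle.symm hab) hb
      rwa [← this])

lemma isFixedClass_out {σ : Perm (Fin p)} (q : Quotient (scSetoid σ)) :
    isFixedClass σ q ↔ σ q.out = q.out := by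
  conv_lhs => rw [← Quotient.out_eq q]
  exact Iff.rfl

lemma out_sameCycle {σ : Perm (Fin p)} (x : Fin p) :
    σ.SameCycle (Quotient.mk (scSetoid σ) x).out x := by
  have h := Quotient.out_eq (Quotient.mk (scSetoid σ) x)
  exact Quotient.exact h

noncomputable def fixedClassEquiv (σ : Perm (Fin p)) :
    {x : Fin p // σ x = x} ≃ {q : Quotient (scSetoid σ) // isFixedClass σ q} where
  toFun x := ⟨Quotient.mk _ x.1, x.2⟩
  invFun q := ⟨q.1.out, (isFixedClass_out q.1).mp q.2⟩
  left_inv x := by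
    apply Subtype.ext
    exact (fixed_of_sameCycle (SameCycle.symm (out_sameCycle x.1)) x.2).symm
  right_inv q := by
    apply Subtype.ext
    exact Quotient.out_eq q.1

lemma factor_support_nonempty {σ c : Perm (Fin p)} (hc : c ∈ σ.cycleFactorsFinset) :
    ∃ x, x ∈ c.support := by
  rcases (mem_cycleFactorsFinset_iff.mp hc).1 with ⟨x, hx1, _⟩
  exact ⟨x, mem_support.mpr hx1⟩

noncomputable def cyclePt {σ : Perm (Fin p)} (c : {c : Perm (Fin p) // c ∈ σ.cycleFactorsFinset}) :
    Fin p := (factor_support_nonempty c.2).choose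

lemma cyclePt_mem {σ : Perm (Fin p)} (c : {c : Perm (Fin p) // c ∈ σ.cycleFactorsFinset}) :
    cyclePt c ∈ c.1.support := (factor_support_nonempty c.2).choose_spec

lemma cyclePt_moved {σ : Perm (Fin p)} (c : {c : Perm (Fin p) // c ∈ σ.cycleFactorsFinset}) :
    σ (cyclePt c) ≠ cyclePt c := by
  have h1 : σ (cyclePt c) = c.1 (cyclePt c) :=
    ((mem_cycleFactorsFinset_iff.mp c.2).2 (cyclePt c) (cyclePt_mem c)).symm
  rw [h1]
  exact mem_support.mp (cyclePt_mem c)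

noncomputable def movedClassEquiv (σ : Perm (Fin p)) :
    {q : Quotient (scSetoid σ) // ¬ isFixedClass σ q} ≃ {c // c ∈ σ.cycleFactorsFinset} where
  toFun q := ⟨σ.cycleOf q.1.out, by
      rw [cycleOf_mem_cycleFactorsFinset_iff, mem_support]
      exact fun h => q.2 ((isFixedClass_out q.1).mpr h)⟩
  invFun c := ⟨Quotient.mk _ (cyclePt c), fun h => cyclePt_moved c h⟩
  left_inv q := by
    apply Subtype.ext
    have hmoved : σ q.1.out ≠ q.1.out := fun h => q.2 ((isFixedClass_out q.1).mpr h)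
    set c : {c // c ∈ σ.cycleFactorsFinset} :=
      ⟨σ.cycleOf q.1.out, by rw [cycleOf_mem_cycleFactorsFinset_iff, mem_support]; exact hmoved⟩
    have hpt : cyclePt c ∈ (σ.cycleOf q.1.out).support := cyclePt_mem c
    have hsc : σ.SameCycle q.1.out (cyclePt c) := ((mem_support_cycleOf_iff).mp hpt).1
    calc Quotient.mk (scSetoid σ) (cyclePt c)
        = Quotient.mk (scSetoid σ) q.1.out := Quotient.sound ((scSetoid σ).symm hsc)
      _ = q.1 := Quotient.out_eq q.1
  right_inv c := by
    apply Subtype.ext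
    have hsc : σ.SameCycle (Quotient.mk (scSetoid σ) (cyclePt c)).out (cyclePt c) :=
      out_sameCycle (cyclePt c)
    have h1 : σ.cycleOf (Quotient.mk (scSetoid σ) (cyclePt c)).out = σ.cycleOf (cyclePt c) :=
      SameCycle.cycleOf_eq hsc
    show σ.cycleOf _ = c.1
    rw [h1]
    exact (cycle_is_cycleOf (cyclePt_mem c) c.2).symm

lemma card_quot (σ : Perm (Fin p)) :
    Fintype.card (Quotient (scSetoid σ)) = cycleCount σ := by
  have h1 : Fintype.card {q : Quotient (scSetoid σ) // ¬ isFixedClass σ q}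
      = Fintype.card (Quotient (scSetoid σ))
        - Fintype.card {q : Quotient (scSetoid σ) // isFixedClass σ q} :=
    Fintype.card_subtype_compl _
  have hle : Fintype.card {q : Quotient (scSetoid σ) // isFixedClass σ q}
      ≤ Fintype.card (Quotient (scSetoid σ)) := Fintype.card_subtype_le _
  have h2 : Fintype.card {q : Quotient (scSetoid σ) // isFixedClass σ q}
      = (Finset.univ.filter fun i => σ i = i).card := by
    rw [← Fintype.card_congr (fixedClassEquiv σ), Fintype.card_subtype]
  have h3 : Fintype.card {q : Quotient (scSetoid σ) // ¬ isFixedClass σ q}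
      = σ.cycleType.card := by
    rw [Fintype.card_congr (movedClassEquiv σ), Fintype.card_coe, cycleType_def]
    simp [Multiset.card_map]
  unfold cycleCount
  omega

lemma finrank_ker_aperm (σ : Perm (Fin p)) :
    finrank ℚ (ker (funLeft ℚ ℚ ⇑σ - LinearMap.id : (Fin p → ℚ) →ₗ[ℚ] (Fin p → ℚ)))
      = cycleCount σ := by
  rw [← (kerEquiv σ).finrank_eq, finrank_pi, card_quot]

lemma finrank_range_aperm (σ : Perm (Fin p)) :
    finrank ℚ (range (funLeft ℚ ℚ ⇑σ - LinearMap.id : (Fin p → ℚ) →ₗ[ℚ] (Fin p → ℚ)))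
      + cycleCount σ = p := by
  have h := LinearMap.finrank_range_add_finrank_ker
    (funLeft ℚ ℚ ⇑σ - LinearMap.id : (Fin p → ℚ) →ₗ[ℚ] (Fin p → ℚ))
  rw [finrank_ker_aperm] at h
  rwa [finrank_pi, Fintype.card_fin] at h

lemma cycleCount_le (σ : Perm (Fin p)) : cycleCount σ ≤ p := by
  have := finrank_range_aperm σ
  omega

lemma mem_ker_aperm_iff {σ : Perm (Fin p)} {v : Fin p → ℚ} :
    v ∈ ker (funLeft ℚ ℚ ⇑σ - LinearMap.id : (Fin p → ℚ) →ₗ[ℚ] (Fin p → ℚ))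
      ↔ ∀ t, v (σ t) = v t := by
  rw [mem_ker]
  constructor
  · intro h t
    have h2 := congrFun h t
    simpa [sub_eq_zero] using h2
  · intro h
    funext t
    simpa [sub_eq_zero] using h t

lemma cycleCount_inv (σ : Perm (Fin p)) : cycleCount σ⁻¹ = cycleCount σ := by
  rw [← finrank_ker_aperm, ← finrank_ker_aperm]
  have hker : (ker (funLeft ℚ ℚ ⇑σ⁻¹ - LinearMap.id : (Fin p → ℚ) →ₗ[ℚ] (Fin p → ℚ)))
      = (ker (funLeft ℚ ℚ ⇑σ - LinearMap.id : (Fin p → ℚ) →ₗ[ℚ] (Fin p → ℚ))) := by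
    ext v
    rw [mem_ker_aperm_iff, mem_ker_aperm_iff]
    constructor
    · intro h t
      have := h (σ t)
      simpa using this.symm
    · intro h t
      have := h (σ⁻¹ t)
      simpa using this.symm
  rw [hker]

lemma cycleCount_conj (σ τ : Perm (Fin p)) : cycleCount (τ⁻¹ * σ * τ) = cycleCount σ := by
  rw [← finrank_ker_aperm, ← finrank_ker_aperm]
  have E : (ker (funLeft ℚ ℚ ⇑(τ⁻¹ * σ * τ) - LinearMap.id : (Fin p → ℚ) →ₗ[ℚ] (Fin p → ℚ)))
      ≃ₗ[ℚ] (ker (funLeft ℚ ℚ ⇑σ - LinearMap.id : (Fin p → ℚ) →ₗ[ℚ] (Fin p → ℚ))) := by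
    refine
      { toFun := fun v => ⟨v.1 ∘ ⇑τ⁻¹, ?_⟩
        map_add' := ?_
        map_smul' := ?_
        invFun := fun w => ⟨w.1 ∘ ⇑τ, ?_⟩
        left_inv := ?_
        right_inv := ?_ }
    · rw [mem_ker_aperm_iff]
      intro t
      have hv := (mem_ker_aperm_iff).mp v.2 (τ⁻¹ t)
      simp only [Function.comp_apply]
      simp only [Equiv.Perm.mul_apply] at hv
      simpa using hv
    · intro a b; apply Subtype.ext; rfl
    · intro a b; apply Subtype.ext; rfl
    · rw [mem_ker_aperm_iff]
      intro t
      have hw := (mem_ker_aperm_iff).mp w.2 (τ t)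
      simp only [Function.comp_apply, Equiv.Perm.mul_apply]
      simpa using hw
    · intro a; apply Subtype.ext; funext t; simp
    · intro a; apply Subtype.ext; funext t; simp
  exact E.finrank_eq

theorem scott_ineq {k : ℕ} (hp : 1 ≤ p) (x : Fin k → Perm (Fin p))
    (hprod : ((List.finRange k).map x).prod = 1)
    (htrans : ∀ i j : Fin p, ∃ σ ∈ Subgroup.closure (Set.range x), σ i = j) :
    2 * (p - 1) + ∑ i : Fin k, cycleCount (x i) ≤ k * p := by
  classical
  set l : List (Perm (Fin p)) := (List.finRange k).map x with hl
  have hlen : l.length = k := by simp [hl]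
  set Q : ℕ → Perm (Fin p) := fun j => (l.take j).prod with hQ
  have hQ0 : Q 0 = 1 := by simp [hQ]
  have hQk : Q k = 1 := by
    have : l.take k = l := by rw [List.take_of_length_le (le_of_eq hlen)]
    rw [hQ]; simp only [this]; exact hprod
  have hQsucc : ∀ i : Fin k, Q (i + 1 : ℕ) = Q i * x i := by
    intro i
    have hik : (i : ℕ) < l.length := by rw [hlen]; exact i.2
    have := List.prod_take_succ l i hik
    rw [hQ]
    simp only [this]
    congr 1
    simp [hl]
  -- the endomorphisms
  set A : Fin k → ((Fin p → ℚ) →ₗ[ℚ] (Fin p → ℚ)) :=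
    fun i => funLeft ℚ ℚ ⇑(x i) - LinearMap.id with hA
  set N : Fin k → Submodule ℚ (Fin p → ℚ) := fun i => range (A i) with hN
  have hmem : ∀ (i : Fin k) (v : Fin p → ℚ),
      (funLeft ℚ ℚ ⇑(Q (i + 1 : ℕ)) - funLeft ℚ ℚ ⇑(Q i)) v ∈ N i := by
    intro i v
    refine ⟨funLeft ℚ ℚ ⇑(Q i) v, ?_⟩
    rw [hQsucc i]
    funext t
    simp [hA, funLeft_apply, Equiv.Perm.mul_apply]
  set θ : (Fin p → ℚ) →ₗ[ℚ] (Π i : Fin k, N i) :=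
    LinearMap.pi (fun i => LinearMap.codRestrict (N i)
      (funLeft ℚ ℚ ⇑(Q (i + 1 : ℕ)) - funLeft ℚ ℚ ⇑(Q i)) (hmem i)) with hθ
  set s : (Π i : Fin k, N i) →ₗ[ℚ] (Fin p → ℚ) :=
    ∑ i : Fin k, (N i).subtype ∘ₗ LinearMap.proj i with hs
  -- ker θ is at most the constants
  have hker : ker θ ≤ Submodule.span ℚ {(fun _ => 1 : Fin p → ℚ)} := by
    intro v hv
    simp only [mem_ker] at hv
    have hcomp : ∀ i : Fin k, v ∘ ⇑(Q (i + 1 : ℕ)) = v ∘ ⇑(Q i) := by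
      intro i
      have h1 := congrFun hv i
      have h2 := congrArg Subtype.val h1
      simp only [hθ, LinearMap.pi_apply, codRestrict_apply, Pi.zero_apply] at h2
      have h3 : (funLeft ℚ ℚ ⇑(Q (i + 1 : ℕ)) - funLeft ℚ ℚ ⇑(Q i)) v = 0 := by
        rw [h2]; rfl
      have h4 := sub_eq_zero.mp h3
      exact h4
    have hQv : ∀ j, j ≤ k → v ∘ ⇑(Q j) = v := by
      intro j
      induction j with
      | zero => intro _; rw [hQ0]; rfl
      | succ m ih =>
          intro hm
          have hmk : m < k := by omega
          have := hcomp ⟨m, hmk⟩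
          simp only [Fin.val_mk] at this
          rw [this, ih (le_of_lt hmk)]
    have hfix : ∀ i : Fin k, ∀ t, v (x i t) = v t := by
      intro i t
      have h1 : v ∘ ⇑(Q ((i : ℕ) + 1)) = v := hQv _ (by omega)
      have h2 : v ∘ ⇑(Q i) = v := hQv _ (le_of_lt i.2)
      have h3 := hQsucc i
      have := congrFun h1 t
      rw [h3] at this
      simp only [Function.comp_apply, Equiv.Perm.mul_apply] at this
      have h4 := congrFun h2 (x i t)
      simp only [Function.comp_apply] at h4
      rw [← this, ← h4]
    -- subgroup of permutations fixing v
    set H : Subgroup (Perm (Fin p)) :=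
      { carrier := {σ | ∀ t, v (σ t) = v t}
        one_mem' := by intro t; rfl
        mul_mem' := by
          intro a b ha hb t
          simp only [Set.mem_setOf_eq] at ha hb ⊢
          rw [Equiv.Perm.mul_apply, ha, hb]
        inv_mem' := by
          intro a ha t
          simp only [Set.mem_setOf_eq] at ha ⊢
          have := ha (a⁻¹ t)
          simpa using this.symm } with hH
    have hclos : Subgroup.closure (Set.range x) ≤ H := by
      rw [Subgroup.closure_le]
      rintro σ ⟨i, rfl⟩
      exact hfix i
    set m0 : Fin p := ⟨0, hp⟩ with hm0
    have hconst : ∀ m : Fin p, v m = v m0 := by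
      intro m
      obtain ⟨σ, hσ, hσm⟩ := htrans m0 m
      have := hclos hσ (m0)
      rw [hσm] at this
      exact this
    rw [Submodule.mem_span_singleton]
    exact ⟨v m0, by funext t; simp [hconst t]⟩
  -- dimension of ker θ
  have hkerdim : finrank ℚ (ker θ) ≤ 1 := by
    calc finrank ℚ (ker θ) ≤ finrank ℚ (Submodule.span ℚ {(fun _ => 1 : Fin p → ℚ)}) :=
          Submodule.finrank_mono hker
      _ = 1 := finrank_span_singleton (by
          intro h
          have := congrFun h ⟨0, hp⟩
          simpa using this)
  -- range θ ≤ ker s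
  have hrs : range θ ≤ ker s := by
    rintro _ ⟨v, rfl⟩
    simp only [mem_ker, hs, LinearMap.sum_apply, LinearMap.comp_apply, LinearMap.proj_apply]
    have : ∀ i : Fin k, ((N i).subtype) (θ v i)
        = (fun j : ℕ => funLeft ℚ ℚ ⇑(Q j) v) ((i : ℕ) + 1)
          - (fun j : ℕ => funLeft ℚ ℚ ⇑(Q j) v) (i : ℕ) := by
      intro i
      simp [hθ, LinearMap.pi_apply]
    rw [Finset.sum_congr rfl (fun i _ => this i)]
    rw [Fin.sum_univ_eq_sum_range
      (fun j => (fun j : ℕ => funLeft ℚ ℚ ⇑(Q j) v) (j + 1) - (fun j : ℕ => funLeft ℚ ℚ ⇑(Q j) v) j) k]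
    rw [Finset.sum_range_sub (fun j : ℕ => funLeft ℚ ℚ ⇑(Q j) v) k]
    rw [hQk, hQ0]
    simp
  -- range s is large
  have hNle : ∀ i : Fin k, N i ≤ range s := by
    intro i w hw
    refine ⟨Pi.single i ⟨w, hw⟩, ?_⟩
    simp only [hs, LinearMap.sum_apply, LinearMap.comp_apply, LinearMap.proj_apply]
    rw [Finset.sum_eq_single i]
    · simp
    · intro b _ hb
      rw [Pi.single_eq_of_ne hb]
      simp
    · intro h; exact absurd (Finset.mem_univ i) h
  have hsub : ∀ σ : Perm (Fin p), σ ∈ Subgroup.closure (Set.range x) →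
      ∀ v : Fin p → ℚ, v ∘ ⇑σ - v ∈ range s := by
    intro σ hσ
    induction hσ using Subgroup.closure_induction with
    | mem τ hτ =>
        obtain ⟨i, rfl⟩ := hτ
        intro v
        exact hNle i ⟨v, by funext t; simp [hA, funLeft_apply]⟩
    | one => intro v; simp
    | mul a b ha hb iha ihb =>
        intro v
        have h1 : v ∘ ⇑(a * b) - v = ((v ∘ ⇑a) ∘ ⇑b - (v ∘ ⇑a)) + (v ∘ ⇑a - v) := by
          funext t
          simp [Equiv.Perm.mul_apply]
        rw [h1]
        exact Submodule.add_mem _ (ihb (v ∘ ⇑a)) (iha v)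
    | inv a ha iha =>
        intro v
        have h1 : v ∘ ⇑a⁻¹ - v = -((v ∘ ⇑a⁻¹) ∘ ⇑a - (v ∘ ⇑a⁻¹)) := by
          funext t
          simp
        rw [h1]
        exact Submodule.neg_mem _ (iha (v ∘ ⇑a⁻¹))
  set m0 : Fin p := ⟨0, hp⟩ with hm0
  have hdiff : ∀ m : Fin p, (Pi.single m 1 : Fin p → ℚ) - Pi.single m0 1 ∈ range s := by
    intro m
    obtain ⟨σ, hσ, hσm⟩ := htrans m0 m
    have h1 := hsub σ hσ (Pi.single m 1)
    have h2 : (Pi.single m 1 : Fin p → ℚ) ∘ ⇑σ = Pi.single m0 1 := by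
      funext t
      simp only [Function.comp_apply, Pi.single_apply]
      have : σ t = m ↔ t = m0 := by
        constructor
        · intro h; apply σ.injective; rw [h, hσm]
        · intro h; rw [h, hσm]
      by_cases h : t = m0
      · rw [if_pos (this.mpr h), if_pos h]
      · rw [if_neg (fun hh => h (this.mp hh)), if_neg h]
    rw [h2] at h1
    have := Submodule.neg_mem _ h1
    simpa using this
  have htop : range s ⊔ Submodule.span ℚ {(Pi.single m0 1 : Fin p → ℚ)} = ⊤ := by
    rw [eq_top_iff]
    intro v _
    have hv := pi_eq_sum_univ v
    rw [hv]
    apply Submodule.sum_mem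
    intro m _
    apply Submodule.smul_mem
    have hone : (fun j => if m = j then (1:ℚ) else 0) = (Pi.single m 1 : Fin p → ℚ) := by
      funext j
      rw [Pi.single_apply]
      by_cases h : m = j
      · rw [if_pos h, if_pos h.symm]
      · rw [if_neg h, if_neg (fun hh => h hh.symm)]
    rw [hone]
    have : (Pi.single m 1 : Fin p → ℚ)
        = ((Pi.single m 1 : Fin p → ℚ) - Pi.single m0 1) + Pi.single m0 1 := by ring
    rw [this]
    exact Submodule.add_mem _ (Submodule.mem_sup_left (hdiff m))
      (Submodule.mem_sup_right (Submodule.mem_span_singleton_self _))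
  have hranges : p ≤ finrank ℚ (range s) + 1 := by
    have h1 : finrank ℚ (⊤ : Submodule ℚ (Fin p → ℚ)) = p := by
      rw [finrank_top, finrank_pi, Fintype.card_fin]
    have h2 : finrank ℚ ↥(range s ⊔ Submodule.span ℚ {(Pi.single m0 1 : Fin p → ℚ)}) = p := by
      rw [htop]; exact h1
    have h3 : finrank ℚ ↥(Submodule.span ℚ {(Pi.single m0 1 : Fin p → ℚ)}) = 1 := by
      apply finrank_span_singleton
      intro h
      have := congrFun h m0
      simp at this
    calc p = finrank ℚ ↥(range s ⊔ Submodule.span ℚ {(Pi.single m0 1 : Fin p → ℚ)}) := h2.symm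
      _ ≤ finrank ℚ ↥(range s) + finrank ℚ ↥(Submodule.span ℚ {(Pi.single m0 1 : Fin p → ℚ)}) :=
          Submodule.finrank_add_le_finrank_add_finrank _ _
      _ = finrank ℚ ↥(range s) + 1 := by rw [h3]
  -- final dimension chase
  have hrn1 : finrank ℚ ↥(range θ) + finrank ℚ ↥(ker θ) = p := by
    rw [LinearMap.finrank_range_add_finrank_ker, finrank_pi, Fintype.card_fin]
  have hrn2 : finrank ℚ ↥(range s) + finrank ℚ ↥(ker s) = ∑ i : Fin k, finrank ℚ ↥(N i) := by
    rw [LinearMap.finrank_range_add_finrank_ker, finrank_pi_fintype]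
  have hmono : finrank ℚ ↥(range θ) ≤ finrank ℚ ↥(ker s) := Submodule.finrank_mono hrs
  have hNsum : ∑ i : Fin k, finrank ℚ ↥(N i) + ∑ i : Fin k, cycleCount (x i) = k * p := by
    rw [← Finset.sum_add_distrib]
    have : ∀ i : Fin k, finrank ℚ ↥(N i) + cycleCount (x i) = p := fun i => finrank_range_aperm (x i)
    rw [Finset.sum_congr rfl (fun i _ => this i)]
    simp [Finset.sum_const, Finset.card_univ, mul_comm]
  omega

lemma telescope_list {G : Type*} [Group G] (f : ℕ → G) (m : ℕ) :
    ((List.range m).map (fun j => (f j)⁻¹ * f (j + 1))).prod = (f 0)⁻¹ * f m := by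
  induction m with
  | zero => simp
  | succ m ih =>
      rw [List.range_succ, List.map_append, List.prod_append, ih]
      simp [mul_assoc]

lemma fin_add_one_val {m : ℕ} (i : Fin (m + 1)) :
    ((i + 1 : Fin (m + 1)) : ℕ) = ((i : ℕ) + 1) % (m + 1) := by
  rw [Fin.add_def, Fin.val_one']
  conv_rhs => rw [Nat.add_mod, Nat.mod_eq_of_lt i.2]

theorem jacket {D p : ℕ} (hp : 1 ≤ p) (P : Fin (D + 1) → Equiv.Perm (Fin p))
    (hconn : ∀ i j : Fin p,
      ∃ σ ∈ Subgroup.closure {σ : Equiv.Perm (Fin p) | ∃ c : Fin (D + 1), σ = (P 0)⁻¹ * P c},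
        σ i = j)
    (g : Equiv.Perm (Fin (D + 1))) :
    2 * (p - 1) + ∑ i : Fin (D + 1), cycleCount (P (g (i + 1)) * (P (g i))⁻¹) ≤ (D + 1) * p := by
  classical
  have hn0 : 0 < D + 1 := Nat.succ_pos D
  set x : Fin (D + 1) → Perm (Fin p) := fun i => (P (g i))⁻¹ * P (g (i + 1)) with hx
  set f : ℕ → Perm (Fin p) := fun j => P (g ⟨j % (D + 1), Nat.mod_lt _ hn0⟩) with hf
  have hfv : ∀ i : Fin (D + 1), f (i : ℕ) = P (g i) := by
    intro i
    simp only [hf]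
    congr 2
    apply Fin.ext
    simp [Nat.mod_eq_of_lt i.2]
  have hfin : ∀ j : ℕ, (⟨(j + 1) % (D + 1), Nat.mod_lt _ hn0⟩ : Fin (D + 1))
      = (⟨j % (D + 1), Nat.mod_lt _ hn0⟩ : Fin (D + 1)) + 1 := by
    intro j
    apply Fin.ext
    rw [fin_add_one_val]
    simp [Nat.mod_add_mod]
  have hfv1 : ∀ j : ℕ, f (j + 1) = P (g ((⟨j % (D + 1), Nat.mod_lt _ hn0⟩ : Fin (D + 1)) + 1)) := by
    intro j
    show P (g ⟨(j + 1) % (D + 1), Nat.mod_lt _ hn0⟩) = _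
    rw [hfin j]
  have hxf : ∀ j : ℕ, (f j)⁻¹ * f (j + 1) = x ⟨j % (D + 1), Nat.mod_lt _ hn0⟩ := by
    intro j
    rw [hx]
    have h1 : f j = P (g ⟨j % (D + 1), Nat.mod_lt _ hn0⟩) := rfl
    rw [h1, hfv1 j]
  -- product is 1
  have hlist : ((List.finRange (D + 1)).map x) = (List.range (D + 1)).map (fun j => (f j)⁻¹ * f (j + 1)) := by
    apply List.ext_getElem
    · simp
    · intro j h1 h2
      simp only [List.getElem_map, List.getElem_finRange, List.getElem_range]
      rw [hxf j]
      congr 1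
      apply Fin.ext
      simp only [Fin.coe_cast]
      simp at h1
      simp [Nat.mod_eq_of_lt (Nat.lt_succ_of_le h1)]
  have hprod : ((List.finRange (D + 1)).map x).prod = 1 := by
    rw [hlist, telescope_list]
    have h0 : f 0 = P (g ⟨0, hn0⟩) := by simp [hf]
    have hnn : f (D + 1) = P (g ⟨0, hn0⟩) := by simp [hf]
    rw [h0, hnn]
    simp
  -- closure contains all (P (g a))⁻¹ * P (g b)
  have hpart : ∀ j : ℕ, (f 0)⁻¹ * f j ∈ Subgroup.closure (Set.range x) := by
    intro j
    induction j with
    | zero => simpa using Subgroup.one_mem _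
    | succ m ih =>
        have : (f 0)⁻¹ * f (m + 1) = ((f 0)⁻¹ * f m) * ((f m)⁻¹ * f (m + 1)) := by
          group
        rw [this, hxf m]
        exact Subgroup.mul_mem _ ih (Subgroup.subset_closure ⟨_, rfl⟩)
  have hab : ∀ a b : Fin (D + 1), (P (g a))⁻¹ * P (g b) ∈ Subgroup.closure (Set.range x) := by
    intro a b
    have h1 := hpart (a : ℕ)
    have h2 := hpart (b : ℕ)
    rw [hfv a] at h1
    rw [hfv b] at h2
    have : (P (g a))⁻¹ * P (g b) = ((f 0)⁻¹ * P (g a))⁻¹ * ((f 0)⁻¹ * P (g b)) := by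
      group
    rw [this]
    exact Subgroup.mul_mem _ (Subgroup.inv_mem _ h1) h2
  have htrans : ∀ i j : Fin p, ∃ σ ∈ Subgroup.closure (Set.range x), σ i = j := by
    intro i j
    obtain ⟨σ, hσ, hσij⟩ := hconn i j
    refine ⟨σ, ?_, hσij⟩
    have hle : Subgroup.closure {σ : Equiv.Perm (Fin p) | ∃ c : Fin (D + 1), σ = (P 0)⁻¹ * P c}
        ≤ Subgroup.closure (Set.range x) := by
      rw [Subgroup.closure_le]
      rintro τ ⟨c, rfl⟩
      have h1 : P (g (g⁻¹ 0)) = P 0 := by simp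
      have h2 : P (g (g⁻¹ c)) = P c := by simp
      have := hab (g⁻¹ 0) (g⁻¹ c)
      rwa [h1, h2] at this
    exact hle hσ
  have hcc : ∀ i : Fin (D + 1), cycleCount (x i) = cycleCount (P (g (i + 1)) * (P (g i))⁻¹) := by
    intro i
    have : x i = (P (g i))⁻¹ * (P (g (i + 1)) * (P (g i))⁻¹) * (P (g i)) := by
      rw [hx]; group
    rw [this, cycleCount_conj]
  have := scott_ineq hp x hprod htrans
  rw [Finset.sum_congr rfl (fun i _ => hcc i)] at this
  exact this

section counting
variable {n : ℕ}

/-- a permutation sending a prescribed pair of distinct points to another -/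
lemma exists_perm_pair {a b c d : Fin n} (hab : a ≠ b) (hcd : c ≠ d) :
    ∃ π : Perm (Fin n), π a = c ∧ π b = d := by
  classical
  set ρ1 := Equiv.swap a c with hρ1
  have h1 : ρ1 a = c := Equiv.swap_apply_left a c
  set b' := ρ1 b with hb'
  have hb'c : b' ≠ c := by
    rw [hb', ← h1]
    intro h
    exact hab (ρ1.injective h).symm
  set ρ2 := Equiv.swap b' d with hρ2
  refine ⟨ρ2 * ρ1, ?_, ?_⟩
  · simp only [Equiv.Perm.mul_apply, h1]
    rw [hρ2, Equiv.swap_apply_of_ne_of_ne (Ne.symm hb'c) hcd]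
  · simp only [Equiv.Perm.mul_apply, ← hb']
    exact Equiv.swap_apply_left b' d

/-- reindexing: the sum over all permutations of `f (g a) (g b)` doesn't depend on the
distinct pair `(a, b)` -/
lemma sum_perm_pair_eq (f : Fin n → Fin n → ℕ) {a b c d : Fin n} (hab : a ≠ b) (hcd : c ≠ d) :
    ∑ g : Perm (Fin n), f (g a) (g b) = ∑ g : Perm (Fin n), f (g c) (g d) := by
  classical
  obtain ⟨π, hπa, hπb⟩ := exists_perm_pair hcd hab
  exact Fintype.sum_equiv (Equiv.mulRight π) _ _ (by
    intro g
    simp [Equiv.Perm.mul_apply, hπa, hπb])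

lemma fiber_card_eq (hn : 2 ≤ n) {a b : Fin n} (hab : a ≠ b) {c d : Fin n} (hcd : c ≠ d) :
    (Finset.univ.filter fun g : Perm (Fin n) => g a = c ∧ g b = d).card
      = (Finset.univ.filter fun g : Perm (Fin n) => g a = a ∧ g b = b).card := by
  classical
  obtain ⟨ρ, hρc, hρd⟩ := exists_perm_pair hcd hab
  apply Finset.card_nbij' (fun g => ρ * g) (fun g => ρ⁻¹ * g)
  · intro g hg
    simp only [Finset.mem_coe, Finset.mem_filter, Finset.mem_univ, true_and] at hg ⊢
    simp [Equiv.Perm.mul_apply, hg.1, hg.2, hρc, hρd]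
  · intro g hg
    simp only [Finset.mem_coe, Finset.mem_filter, Finset.mem_univ, true_and] at hg ⊢
    constructor
    · rw [Equiv.Perm.mul_apply, hg.1, ← hρc]; simp
    · rw [Equiv.Perm.mul_apply, hg.2, ← hρd]; simp
  · intro g _; simp [mul_assoc]
  · intro g _; simp [mul_assoc]

end counting


/-- Let `D ≥ 1`, `p ≥ 1`, and a closed `(D+1)`-colored graph with `2p` vertices
be encoded by permutations `π_0, …, π_D` of `{1,…,p}`. If the graph is connected (the subgroup
generated by `{π_0⁻¹∘π_c}` acts transitively), then the total face count
`F = Σ_{c<c'} #cycles(π_{c'}∘π_c⁻¹)` satisfies `F ≤ D + D(D−1)p/2`, i.e. the degree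
`ω := ((D−1)!/2)·(D + D(D−1)p/2 − F)` is nonnegative. -/
theorem colored_graph_degree_nonneg (D p : ℕ) (hD : 1 ≤ D) (hp : 1 ≤ p)
    (P : Fin (D + 1) → Equiv.Perm (Fin p))
    (hconn : ∀ i j : Fin p,
      ∃ σ ∈ Subgroup.closure {σ : Equiv.Perm (Fin p) | ∃ c : Fin (D + 1), σ = (P 0)⁻¹ * P c},
        σ i = j) :
    ((∑ c : Fin (D + 1), ∑ c' ∈ Finset.univ.filter (fun c' => c < c'),
        cycleCount (P c' * (P c)⁻¹) : ℕ) : ℚ)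
      ≤ (D : ℚ) + (D : ℚ) * ((D : ℚ) - 1) * (p : ℚ) / 2 := by
  classical
  have hn2 : 2 ≤ D + 1 := by omega
  set f : Fin (D + 1) → Fin (D + 1) → ℕ := fun a b => cycleCount (P a * (P b)⁻¹) with hf
  have hsymm : ∀ a b, f a b = f b a := by
    intro a b
    show cycleCount (P a * (P b)⁻¹) = cycleCount (P b * (P a)⁻¹)
    have h2 : (P a * (P b)⁻¹)⁻¹ = P b * (P a)⁻¹ := by group
    rw [← cycleCount_inv (P a * (P b)⁻¹), h2]
  set F : ℕ := ∑ c : Fin (D + 1), ∑ c' ∈ Finset.univ.filter (fun c' => c < c'), f c' c with hF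
  have h01 : (0 : Fin (D + 1)) ≠ 1 := by
    intro h
    have hth := congrArg Fin.val h
    have h1 : ((1 : Fin (D + 1)) : ℕ) = 1 % (D + 1) := Fin.val_one' _
    have h2 : (1 : ℕ) % (D + 1) = 1 := Nat.mod_eq_of_lt (by omega)
    rw [Fin.val_zero, h1, h2] at hth
    exact absurd hth (by omega)
  set c0 : ℕ := (Finset.univ.filter fun g : Perm (Fin (D + 1)) => g 0 = 0 ∧ g 1 = 1).card with hc0
  have hc0pos : 0 < c0 := by
    rw [hc0]
    apply Finset.card_pos.mpr
    exact ⟨1, by simp⟩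
  set K : ℕ := Fintype.card (Perm (Fin (D + 1))) with hK
  -- fiberwise sum over the two-point evaluation
  have hfiber : ∀ h : Fin (D + 1) → Fin (D + 1) → ℕ,
      ∑ g : Perm (Fin (D + 1)), h (g 0) (g 1)
        = ∑ y ∈ (Finset.univ ×ˢ Finset.univ).filter
            (fun y : Fin (D + 1) × Fin (D + 1) => y.1 ≠ y.2), c0 * h y.1 y.2 := by
    intro h
    rw [← Finset.sum_fiberwise_of_maps_to (g := fun g : Perm (Fin (D + 1)) => (g 0, g 1))
      (t := (Finset.univ ×ˢ Finset.univ).filter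
        (fun y : Fin (D + 1) × Fin (D + 1) => y.1 ≠ y.2))
      (fun g _ => by
        simp only [Finset.mem_filter, Finset.mem_product, Finset.mem_univ, true_and]
        exact fun hh => h01 (g.injective hh))
      (fun g => h (g 0) (g 1))]
    apply Finset.sum_congr rfl
    intro y hy
    simp only [Finset.mem_filter, Finset.mem_product, Finset.mem_univ, true_and] at hy
    have hcard : (Finset.univ.filter fun g : Perm (Fin (D + 1)) => (g 0, g 1) = y).card = c0 := by
      have heq : (Finset.univ.filter fun g : Perm (Fin (D + 1)) => (g 0, g 1) = y)
          = (Finset.univ.filter fun g : Perm (Fin (D + 1)) => g 0 = y.1 ∧ g 1 = y.2) := by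
        apply Finset.filter_congr
        intro g _
        constructor
        · intro hh; exact ⟨congrArg Prod.fst hh, congrArg Prod.snd hh⟩
        · intro hh; exact Prod.ext hh.1 hh.2
      rw [heq, hc0]
      exact fiber_card_eq hn2 h01 hy
    calc ∑ g ∈ Finset.univ.filter fun g : Perm (Fin (D + 1)) => (g 0, g 1) = y, h (g 0) (g 1)
        = ∑ g ∈ Finset.univ.filter fun g : Perm (Fin (D + 1)) => (g 0, g 1) = y, h y.1 y.2 := by
          apply Finset.sum_congr rfl
          intro g hg
          simp only [Finset.mem_filter] at hg
          rw [← hg.2]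
      _ = c0 * h y.1 y.2 := by rw [Finset.sum_const, hcard, smul_eq_mul]
  -- the cardinality of the off-diagonal
  have hcard2 : ((Finset.univ ×ˢ Finset.univ).filter
      (fun y : Fin (D + 1) × Fin (D + 1) => y.1 ≠ y.2)).card = (D + 1) * D := by
    have heq : (Finset.univ ×ˢ Finset.univ).filter
        (fun y : Fin (D + 1) × Fin (D + 1) => y.1 ≠ y.2)
        = (Finset.univ : Finset (Fin (D + 1))).offDiag := by
      ext y
      simp [Finset.mem_offDiag]
    rw [heq, Finset.offDiag_card]
    simp only [Finset.card_univ, Fintype.card_fin]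
    rw [Nat.mul_succ, Nat.add_sub_cancel]
  -- total count
  have hKc0 : K = (D + 1) * D * c0 := by
    have h3 := hfiber (fun _ _ => 1)
    simp only [mul_one] at h3
    rw [Finset.sum_const, Finset.card_univ, Finset.sum_const, hcard2] at h3
    simpa [hK] using h3
  -- sum of jacket inequality over g
  have hsum : K * (2 * (p - 1)) + ∑ g : Perm (Fin (D + 1)), ∑ i : Fin (D + 1),
      f (g (i + 1)) (g i) ≤ K * ((D + 1) * p) := by
    have h1 := fun g : Perm (Fin (D + 1)) => jacket hp P hconn g
    calc K * (2 * (p - 1)) + ∑ g : Perm (Fin (D + 1)), ∑ i : Fin (D + 1), f (g (i + 1)) (g i)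
        = ∑ g : Perm (Fin (D + 1)), (2 * (p - 1) + ∑ i : Fin (D + 1), f (g (i + 1)) (g i)) := by
          rw [Finset.sum_add_distrib, Finset.sum_const, Finset.card_univ, smul_eq_mul]
      _ ≤ ∑ _g : Perm (Fin (D + 1)), ((D + 1) * p) := Finset.sum_le_sum (fun g _ => h1 g)
      _ = K * ((D + 1) * p) := by
          rw [Finset.sum_const, Finset.card_univ, smul_eq_mul]
  -- reindex the double sum
  have hdouble : ∑ g : Perm (Fin (D + 1)), ∑ i : Fin (D + 1), f (g (i + 1)) (g i)
      = (D + 1) * ∑ g : Perm (Fin (D + 1)), f (g 0) (g 1) := by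
    rw [Finset.sum_comm]
    have hre : ∀ i : Fin (D + 1), ∑ g : Perm (Fin (D + 1)), f (g (i + 1)) (g i)
        = ∑ g : Perm (Fin (D + 1)), f (g 0) (g 1) := by
      intro i
      apply sum_perm_pair_eq
      · intro h
        have h0 : (1 : Fin (D + 1)) = 0 := by
          apply add_left_cancel (a := i)
          rw [add_zero]
          exact h
        exact h01 h0.symm
      · exact h01
    rw [Finset.sum_congr rfl (fun i _ => hre i), Finset.sum_const, Finset.card_univ,
      smul_eq_mul, Fintype.card_fin]
  -- relate the offDiag sum to F
  have hoffdiag : ∑ y ∈ (Finset.univ ×ˢ Finset.univ).filter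
      (fun y : Fin (D + 1) × Fin (D + 1) => y.1 ≠ y.2), c0 * f y.1 y.2 = c0 * (2 * F) := by
    rw [← Finset.mul_sum]
    congr 1
    have hsplit : ∑ y ∈ (Finset.univ ×ˢ Finset.univ).filter
        (fun y : Fin (D + 1) × Fin (D + 1) => y.1 ≠ y.2), f y.1 y.2
        = ∑ c : Fin (D + 1), ∑ c' : Fin (D + 1), (if c < c' then f c c' + f c' c else 0) := by
      rw [Finset.sum_filter, Finset.sum_product]
      have hpt : ∀ c c' : Fin (D + 1), (if c ≠ c' then f c c' else 0)
          = (if c < c' then f c c' else 0) + (if c' < c then f c c' else 0) := by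
        intro c c'
        rcases lt_trichotomy c c' with h | h | h
        · rw [if_pos (ne_of_lt h), if_pos h, if_neg (not_lt_of_gt h)]
          omega
        · subst h
          simp
        · rw [if_pos (Ne.symm (ne_of_lt h)), if_neg (not_lt_of_gt h), if_pos h]
          omega
      calc ∑ c : Fin (D + 1), ∑ c' : Fin (D + 1), (if c ≠ c' then f c c' else 0)
          = ∑ c : Fin (D + 1), ∑ c' : Fin (D + 1),
              ((if c < c' then f c c' else 0) + (if c' < c then f c c' else 0)) := by
            exact Finset.sum_congr rfl (fun c _ => Finset.sum_congr rfl (fun c' _ => hpt c c'))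
        _ = (∑ c : Fin (D + 1), ∑ c' : Fin (D + 1), (if c < c' then f c c' else 0))
            + ∑ c : Fin (D + 1), ∑ c' : Fin (D + 1), (if c' < c then f c c' else 0) := by
            rw [← Finset.sum_add_distrib]
            exact Finset.sum_congr rfl (fun c _ => Finset.sum_add_distrib)
        _ = (∑ c : Fin (D + 1), ∑ c' : Fin (D + 1), (if c < c' then f c c' else 0))
            + ∑ c : Fin (D + 1), ∑ c' : Fin (D + 1), (if c < c' then f c' c else 0) := by
            congr 1
            rw [Finset.sum_comm]
        _ = ∑ c : Fin (D + 1), ∑ c' : Fin (D + 1), (if c < c' then f c c' + f c' c else 0) := by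
            rw [← Finset.sum_add_distrib]
            apply Finset.sum_congr rfl
            intro c _
            rw [← Finset.sum_add_distrib]
            apply Finset.sum_congr rfl
            intro c' _
            by_cases h : c < c'
            · simp [h]
            · simp [h]
    rw [hsplit]
    have hite : ∀ c c' : Fin (D + 1), (if c < c' then f c c' + f c' c else 0)
        = (if c < c' then 2 * f c' c else 0) := by
      intro c c'
      by_cases h : c < c'
      · rw [if_pos h, if_pos h, hsymm c c']
        omega
      · rw [if_neg h, if_neg h]
    rw [Finset.sum_congr rfl (fun c _ => Finset.sum_congr rfl (fun c' _ => hite c _))]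
    rw [hF, Finset.mul_sum]
    apply Finset.sum_congr rfl
    intro c _
    rw [← Finset.sum_filter, Finset.mul_sum]
  -- combine everything
  have hkey : K * (2 * (p - 1)) + (D + 1) * (c0 * (2 * F)) ≤ K * ((D + 1) * p) := by
    have h2 := hfiber f
    rw [hoffdiag] at h2
    rw [hdouble, h2] at hsum
    exact hsum
  -- cancel c0 and (D + 1)
  set m : ℕ := p - 1 with hm
  have hstep1 : c0 * ((D + 1) * D * (2 * m) + (D + 1) * (2 * F))
      ≤ c0 * ((D + 1) * D * ((D + 1) * p)) := by
    calc c0 * ((D + 1) * D * (2 * m) + (D + 1) * (2 * F))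
        = K * (2 * m) + (D + 1) * (c0 * (2 * F)) := by rw [hKc0]; ring
      _ ≤ K * ((D + 1) * p) := hkey
      _ = c0 * ((D + 1) * D * ((D + 1) * p)) := by rw [hKc0]; ring
  have hstep2 : (D + 1) * D * (2 * m) + (D + 1) * (2 * F)
      ≤ (D + 1) * D * ((D + 1) * p) := Nat.le_of_mul_le_mul_left hstep1 hc0pos
  have hstep3 : (D + 1) * (D * (2 * m) + 2 * F) ≤ (D + 1) * (D * ((D + 1) * p)) := by
    calc (D + 1) * (D * (2 * m) + 2 * F)
        = (D + 1) * D * (2 * m) + (D + 1) * (2 * F) := by ring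
      _ ≤ (D + 1) * D * ((D + 1) * p) := hstep2
      _ = (D + 1) * (D * ((D + 1) * p)) := by ring
  have hstep4 : D * (2 * m) + 2 * F ≤ D * ((D + 1) * p) :=
    Nat.le_of_mul_le_mul_left hstep3 (by omega)
  -- cast to ℚ
  have hcast : ((D * (2 * m) + 2 * F : ℕ) : ℚ) ≤ ((D * ((D + 1) * p) : ℕ) : ℚ) := by
    exact_mod_cast hstep4
  have hmq : ((m : ℕ) : ℚ) = (p : ℚ) - 1 := by
    rw [hm, Nat.cast_sub hp]
    simp
  push_cast at hcast
  rw [hmq] at hcast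
  nlinarith [hcast]
end
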